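/- For any smooth function u on Ω = [−1,1]² with vanishing normal derivative on ∂Ω that is a finite linear combination of the cosine basis functions u_m, the L²-norm of the Laplacian equals the L²-norm of the Hessian: ∫_Ω (Δu)² dx = ∫_Ω |Hu|_F² dx. -/

import Mathlib

open Real Set intervalIntegral

noncomputable def pdx2 (u : ℝ → ℝ → ℝ) (x y : ℝ) : ℝ :=
  iteratedDeriv 2 (fun t => u t y) x

noncomputable def pdy2 (u : ℝ → ℝ → ℝ) (x y : ℝ) : ℝ :=
  iteratedDeriv 2 (fun t => u x t) y

/-- The two-dimensional Laplacian. -/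
noncomputable def lap (u : ℝ → ℝ → ℝ) (x y : ℝ) : ℝ :=
  pdx2 u x y + pdy2 u x y

/-- Mixed second partial derivative. -/
noncomputable def pdxy (u : ℝ → ℝ → ℝ) (x y : ℝ) : ℝ :=
  deriv (fun t => deriv (fun s => u s t) x) y

/-- Squared Frobenius norm of the Hessian of `u`. -/
noncomputable def hessF2 (u : ℝ → ℝ → ℝ) (x y : ℝ) : ℝ :=
  (pdx2 u x y) ^ 2 + 2 * (pdxy u x y) ^ 2 + (pdy2 u x y) ^ 2

/-- Tensor-product cosine function `u_m`. -/
noncomputable def cosB (m₁ m₂ : ℕ) (c x y : ℝ) : ℝ :=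
  c * Real.cos (π * m₁ / 2 * (x + 1)) * Real.cos (π * m₂ / 2 * (y + 1))

/- ---------- auxiliary definitions and lemmas ---------- -/

noncomputable def Cc (k : ℕ) (x : ℝ) : ℝ := Real.cos (π * k / 2 * (x + 1))
noncomputable def Sc (k : ℕ) (x : ℝ) : ℝ := Real.sin (π * k / 2 * (x + 1))

lemma contCc (k : ℕ) : Continuous (Cc k) := by unfold Cc; fun_prop
lemma contSc (k : ℕ) : Continuous (Sc k) := by unfold Sc; fun_prop

lemma hasDerivAt_aff (k : ℕ) (x : ℝ) :
    HasDerivAt (fun x : ℝ => π * k / 2 * (x + 1)) (π * k / 2) x := by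
  simpa using ((hasDerivAt_id x).add_const 1).const_mul (π * k / 2)

lemma hasDerivAt_Cc (k : ℕ) (x : ℝ) : HasDerivAt (Cc k) (-(π * k / 2) * Sc k x) x := by
  have h := (Real.hasDerivAt_cos (π * k / 2 * (x + 1))).comp x (hasDerivAt_aff k x)
  unfold Cc Sc
  exact h.congr_deriv (by ring)

lemma hasDerivAt_Sc (k : ℕ) (x : ℝ) : HasDerivAt (Sc k) ((π * k / 2) * Cc k x) x := by
  have h := (Real.hasDerivAt_sin (π * k / 2 * (x + 1))).comp x (hasDerivAt_aff k x)
  unfold Cc Sc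
  exact h.congr_deriv (by ring)

lemma deriv_sumC {ι : Type*} (G : Finset ι) (b : ι → ℝ) (d : ι → ℕ) :
    deriv (fun t => ∑ i ∈ G, b i * Cc (d i) t)
      = fun x => ∑ i ∈ G, (b i * -(π * d i / 2)) * Sc (d i) x := by
  funext x
  have h : HasDerivAt (fun t => ∑ i ∈ G, b i * Cc (d i) t)
      (∑ i ∈ G, b i * (-(π * d i / 2) * Sc (d i) x)) x :=
    HasDerivAt.fun_sum fun i _ => (hasDerivAt_Cc (d i) x).const_mul (b i)
  rw [h.deriv]
  exact Finset.sum_congr rfl fun i _ => by ring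

lemma deriv_sumS {ι : Type*} (G : Finset ι) (b : ι → ℝ) (d : ι → ℕ) :
    deriv (fun t => ∑ i ∈ G, b i * Sc (d i) t)
      = fun x => ∑ i ∈ G, (b i * (π * d i / 2)) * Cc (d i) x := by
  funext x
  have h : HasDerivAt (fun t => ∑ i ∈ G, b i * Sc (d i) t)
      (∑ i ∈ G, b i * ((π * d i / 2) * Cc (d i) x)) x :=
    HasDerivAt.fun_sum fun i _ => (hasDerivAt_Sc (d i) x).const_mul (b i)
  rw [h.deriv]
  exact Finset.sum_congr rfl fun i _ => by ring

lemma iter2_sumC {ι : Type*} (G : Finset ι) (b : ι → ℝ) (d : ι → ℕ) (x : ℝ) :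
    iteratedDeriv 2 (fun t => ∑ i ∈ G, b i * Cc (d i) t) x
      = ∑ i ∈ G, (b i * -((π * d i / 2) ^ 2)) * Cc (d i) x := by
  rw [iteratedDeriv_succ, iteratedDeriv_one, deriv_sumC, deriv_sumS]
  exact Finset.sum_congr rfl fun i _ => by ring

lemma int_cos_base (n : ℤ) :
    (∫ x in (-1:ℝ)..1, Real.cos (π * n / 2 * (x + 1))) = if n = 0 then 2 else 0 := by
  by_cases h : n = 0
  · simp [h]; norm_num
  · have hn : (n:ℝ) ≠ 0 := Int.cast_ne_zero.mpr h
    have hc : π * n / 2 ≠ 0 := by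
      have := Real.pi_ne_zero
      exact div_ne_zero (mul_ne_zero this hn) two_ne_zero
    have key : (∫ x in (-1:ℝ)..1, Real.cos ((π * n / 2) * x + (π * n / 2)))
        = (π * n / 2)⁻¹ • ∫ x in ((π * n / 2) * (-1) + π * n / 2)..((π * n / 2) * 1 + π * n / 2), Real.cos x :=
      intervalIntegral.integral_comp_mul_add Real.cos hc (π * n / 2)
    have e1 : (∫ x in (-1:ℝ)..1, Real.cos (π * n / 2 * (x + 1)))
        = ∫ x in (-1:ℝ)..1, Real.cos ((π * n / 2) * x + (π * n / 2)) := by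
      apply intervalIntegral.integral_congr
      intro x _
      ring_nf
    rw [e1, key]
    have : ((π * n / 2) * (-1) + π * n / 2) = 0 := by ring
    rw [this]
    have : ((π * n / 2) * 1 + π * n / 2) = n * π := by ring
    rw [this, integral_cos, Real.sin_int_mul_pi]
    simp [h]

lemma int_cos_int (r : ℝ) (n : ℤ) (hrn : r = n) :
    (∫ x in (-1:ℝ)..1, Real.cos (π * r / 2 * (x + 1))) = if r = 0 then 2 else 0 := by
  subst hrn
  rw [int_cos_base n]
  by_cases h : n = 0 <;> simp [h]

lemma ICC_val (k l : ℕ) :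
    (∫ x in (-1:ℝ)..1, Cc k x * Cc l x)
      = if k = l then (if k = 0 then 2 else 1) else 0 := by
  have hpt : ∀ x : ℝ, Cc k x * Cc l x
      = (Real.cos (π * ((k:ℝ) - l) / 2 * (x + 1)) + Real.cos (π * ((k:ℝ) + l) / 2 * (x + 1))) / 2 := by
    intro x
    unfold Cc
    have h1 : π * ((k:ℝ) - l) / 2 * (x + 1) = π * k / 2 * (x + 1) - π * l / 2 * (x + 1) := by ring
    have h2 : π * ((k:ℝ) + l) / 2 * (x + 1) = π * k / 2 * (x + 1) + π * l / 2 * (x + 1) := by ring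
    rw [h1, h2, Real.cos_sub, Real.cos_add]
    ring
  rw [intervalIntegral.integral_congr (fun x _ => hpt x)]
  have hi1 : IntervalIntegrable (fun x : ℝ => Real.cos (π * ((k:ℝ) - l) / 2 * (x + 1)))
      MeasureTheory.volume (-1) 1 := by
    apply Continuous.intervalIntegrable; fun_prop
  have hi2 : IntervalIntegrable (fun x : ℝ => Real.cos (π * ((k:ℝ) + l) / 2 * (x + 1)))
      MeasureTheory.volume (-1) 1 := by
    apply Continuous.intervalIntegrable; fun_prop
  rw [intervalIntegral.integral_div, intervalIntegral.integral_add hi1 hi2,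
    int_cos_int ((k:ℝ) - l) ((k:ℤ) - l) (by push_cast; ring),
    int_cos_int ((k:ℝ) + l) ((k:ℤ) + l) (by push_cast; ring)]
  have e1 : ((k:ℝ) - l = 0) ↔ k = l := by
    constructor
    · intro h; have : (k:ℝ) = l := by linarith
      exact_mod_cast this
    · intro h; subst h; ring
  have e2 : ((k:ℝ) + l = 0) ↔ (k = 0 ∧ l = 0) := by
    rw [show ((k:ℝ) + l) = ((k + l : ℕ) : ℝ) by push_cast; ring, Nat.cast_eq_zero]
    omega
  by_cases hkl : k = l
  · subst hkl
    by_cases hk : k = 0 <;> simp [e1, e2, hk] <;> norm_num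
  · have hne : ¬(k = 0 ∧ l = 0) := by omega
    simp [e1, e2, hkl, hne]

lemma ISS_val (k l : ℕ) :
    (∫ x in (-1:ℝ)..1, Sc k x * Sc l x)
      = if k = l then (if k = 0 then 0 else 1) else 0 := by
  have hpt : ∀ x : ℝ, Sc k x * Sc l x
      = (Real.cos (π * ((k:ℝ) - l) / 2 * (x + 1)) - Real.cos (π * ((k:ℝ) + l) / 2 * (x + 1))) / 2 := by
    intro x
    unfold Sc
    have h1 : π * ((k:ℝ) - l) / 2 * (x + 1) = π * k / 2 * (x + 1) - π * l / 2 * (x + 1) := by ring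
    have h2 : π * ((k:ℝ) + l) / 2 * (x + 1) = π * k / 2 * (x + 1) + π * l / 2 * (x + 1) := by ring
    rw [h1, h2, Real.cos_sub, Real.cos_add]
    ring
  rw [intervalIntegral.integral_congr (fun x _ => hpt x)]
  have hi1 : IntervalIntegrable (fun x : ℝ => Real.cos (π * ((k:ℝ) - l) / 2 * (x + 1)))
      MeasureTheory.volume (-1) 1 := by
    apply Continuous.intervalIntegrable; fun_prop
  have hi2 : IntervalIntegrable (fun x : ℝ => Real.cos (π * ((k:ℝ) + l) / 2 * (x + 1)))
      MeasureTheory.volume (-1) 1 := by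
    apply Continuous.intervalIntegrable; fun_prop
  rw [intervalIntegral.integral_div, intervalIntegral.integral_sub hi1 hi2,
    int_cos_int ((k:ℝ) - l) ((k:ℤ) - l) (by push_cast; ring),
    int_cos_int ((k:ℝ) + l) ((k:ℤ) + l) (by push_cast; ring)]
  have e1 : ((k:ℝ) - l = 0) ↔ k = l := by
    constructor
    · intro h; have : (k:ℝ) = l := by linarith
      exact_mod_cast this
    · intro h; subst h; ring
  have e2 : ((k:ℝ) + l = 0) ↔ (k = 0 ∧ l = 0) := by
    rw [show ((k:ℝ) + l) = ((k + l : ℕ) : ℝ) by push_cast; ring, Nat.cast_eq_zero]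
    omega
  by_cases hkl : k = l
  · subst hkl
    by_cases hk : k = 0 <;> simp [e1, e2, hk] <;> norm_num
  · have hne : ¬(k = 0 ∧ l = 0) := by omega
    simp [e1, e2, hkl, hne]

lemma keyCS (k l : ℕ) :
    (π * k / 2) * (π * l / 2) * (∫ x in (-1:ℝ)..1, Sc k x * Sc l x)
      = (π * k / 2) ^ 2 * (∫ x in (-1:ℝ)..1, Cc k x * Cc l x) := by
  rw [ICC_val, ISS_val]
  by_cases hkl : k = l
  · subst hkl
    by_cases hk : k = 0 <;> simp [hk] <;> ring
  · simp [hkl]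

lemma keyCS' (k l : ℕ) :
    (π * k / 2) * (π * l / 2) * (∫ x in (-1:ℝ)..1, Sc k x * Sc l x)
      = (π * l / 2) ^ 2 * (∫ x in (-1:ℝ)..1, Cc k x * Cc l x) := by
  rw [ICC_val, ISS_val]
  by_cases hkl : k = l
  · subst hkl
    by_cases hk : k = 0 <;> simp [hk] <;> ring
  · simp [hkl]

lemma iint_sum2 {κ : Type*} (G : Finset κ) (f1 g1 f2 g2 : κ → ℝ → ℝ)
    (hf1 : ∀ i, Continuous (f1 i)) (hg1 : ∀ i, Continuous (g1 i))
    (hf2 : ∀ i, Continuous (f2 i)) (hg2 : ∀ i, Continuous (g2 i)) :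
    (∫ x in (-1:ℝ)..1, ∫ y in (-1:ℝ)..1, ∑ i ∈ G, (f1 i x * g1 i y + f2 i x * g2 i y))
      = ∑ i ∈ G, ((∫ x in (-1:ℝ)..1, f1 i x) * (∫ y in (-1:ℝ)..1, g1 i y)
          + (∫ x in (-1:ℝ)..1, f2 i x) * (∫ y in (-1:ℝ)..1, g2 i y)) := by
  have hinner : ∀ x : ℝ, (∫ y in (-1:ℝ)..1, ∑ i ∈ G, (f1 i x * g1 i y + f2 i x * g2 i y))
      = ∑ i ∈ G, (f1 i x * (∫ y in (-1:ℝ)..1, g1 i y) + f2 i x * (∫ y in (-1:ℝ)..1, g2 i y)) := by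
    intro x
    rw [integral_finset_sum (fun i _ => Continuous.intervalIntegrable (by
      exact (continuous_const.mul (hg1 i)).add (continuous_const.mul (hg2 i))) _ _)]
    refine Finset.sum_congr rfl fun i _ => ?_
    rw [integral_add (Continuous.intervalIntegrable (u := fun y => f1 i x * g1 i y) (continuous_const.mul (hg1 i)) _ _)
        (Continuous.intervalIntegrable (u := fun y => f2 i x * g2 i y) (continuous_const.mul (hg2 i)) _ _),
      integral_const_mul, integral_const_mul]
  rw [integral_congr (fun x _ => hinner x),
    integral_finset_sum (fun i _ => Continuous.intervalIntegrable (by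
      exact ((hf1 i).mul continuous_const).add ((hf2 i).mul continuous_const)) _ _)]
  refine Finset.sum_congr rfl fun i _ => ?_
  rw [integral_add (Continuous.intervalIntegrable (u := fun x => f1 i x * ∫ y in (-1:ℝ)..1, g1 i y) ((hf1 i).mul continuous_const) _ _)
      (Continuous.intervalIntegrable (u := fun x => f2 i x * ∫ y in (-1:ℝ)..1, g2 i y) ((hf2 i).mul continuous_const) _ _),
    integral_mul_const, integral_mul_const]

lemma sq_sum_prod {κ : Type*} (G : Finset κ) (v : κ → ℝ) (f : κ → ℝ) :
    (∑ i ∈ G, v i * f i) ^ 2 = ∑ p ∈ G ×ˢ G, (v p.1 * f p.1) * (v p.2 * f p.2) := by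
  rw [sq, Finset.sum_mul_sum, ← Finset.sum_product']

/-- For a finite linear combination `u = Σ_m û_m u_m` of the `L²`-normalized cosine basis
functions on `Ω = [-1,1]²` (which has vanishing normal derivative on `∂Ω`), the `L²`-norm
of the Laplacian equals the `L²`-norm of the Hessian:
`∫_Ω (Δu)² = ∫_Ω |Hu|_F²`. -/
theorem stmt_12 (F : Finset (ℕ × ℕ)) (a : ℕ × ℕ → ℝ) (c : ℕ × ℕ → ℝ)
    (hnorm : ∀ m ∈ F,
      (∫ x in (-1 : ℝ)..1, ∫ y in (-1 : ℝ)..1, (cosB m.1 m.2 (c m) x y) ^ 2) = 1)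
    (u : ℝ → ℝ → ℝ)
    (hu : u = fun x y => ∑ m ∈ F, a m * cosB m.1 m.2 (c m) x y) :
    (∫ x in (-1 : ℝ)..1, ∫ y in (-1 : ℝ)..1, (lap u x y) ^ 2)
      = ∫ x in (-1 : ℝ)..1, ∫ y in (-1 : ℝ)..1, hessF2 u x y := by
  subst hu
  set b : ℕ × ℕ → ℝ := fun m => a m * c m with hb
  set Q : ℕ × ℕ → ℝ := fun m => b m * -((π * m.1 / 2) ^ 2) with hQ
  set R : ℕ × ℕ → ℝ := fun m => b m * -((π * m.2 / 2) ^ 2) with hR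
  set S : ℕ × ℕ → ℝ := fun m => b m * (π * m.1 / 2) * (π * m.2 / 2) with hS
  -- second partial derivative formulas
  have hx2 : ∀ x y : ℝ,
      pdx2 (fun x y => ∑ m ∈ F, a m * cosB m.1 m.2 (c m) x y) x y
        = ∑ m ∈ F, Q m * (Cc m.1 x * Cc m.2 y) := by
    intro x y
    unfold pdx2
    have e : (fun t => ∑ m ∈ F, a m * cosB m.1 m.2 (c m) t y)
        = fun t => ∑ m ∈ F, (b m * Cc m.2 y) * Cc m.1 t := by
      funext t
      refine Finset.sum_congr rfl fun m _ => ?_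
      simp only [hb, cosB, Cc]
      ring
    rw [e, iter2_sumC F (fun m => b m * Cc m.2 y) (fun m => m.1) x]
    refine Finset.sum_congr rfl fun m _ => ?_
    simp only [hQ]
    ring
  have hy2 : ∀ x y : ℝ,
      pdy2 (fun x y => ∑ m ∈ F, a m * cosB m.1 m.2 (c m) x y) x y
        = ∑ m ∈ F, R m * (Cc m.1 x * Cc m.2 y) := by
    intro x y
    unfold pdy2
    have e : (fun t => ∑ m ∈ F, a m * cosB m.1 m.2 (c m) x t)
        = fun t => ∑ m ∈ F, (b m * Cc m.1 x) * Cc m.2 t := by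
      funext t
      refine Finset.sum_congr rfl fun m _ => ?_
      simp only [hb, cosB, Cc]
      ring
    rw [e, iter2_sumC F (fun m => b m * Cc m.1 x) (fun m => m.2) y]
    refine Finset.sum_congr rfl fun m _ => ?_
    simp only [hR]
    ring
  have hxy : ∀ x y : ℝ,
      pdxy (fun x y => ∑ m ∈ F, a m * cosB m.1 m.2 (c m) x y) x y
        = ∑ m ∈ F, S m * (Sc m.1 x * Sc m.2 y) := by
    intro x y
    unfold pdxy
    have e1 : (fun t => deriv (fun s => ∑ m ∈ F, a m * cosB m.1 m.2 (c m) s t) x)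
        = fun t => ∑ m ∈ F, (b m * -(π * m.1 / 2) * Sc m.1 x) * Cc m.2 t := by
      funext t
      have e : (fun s => ∑ m ∈ F, a m * cosB m.1 m.2 (c m) s t)
          = fun s => ∑ m ∈ F, (b m * Cc m.2 t) * Cc m.1 s := by
        funext s
        refine Finset.sum_congr rfl fun m _ => ?_
        simp only [hb, cosB, Cc]
        ring
      rw [e, deriv_sumC F (fun m => b m * Cc m.2 t) (fun m => m.1)]
      refine Finset.sum_congr rfl fun m _ => ?_
      ring
    rw [e1, deriv_sumC F (fun m => b m * -(π * m.1 / 2) * Sc m.1 x) (fun m => m.2)]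
    refine Finset.sum_congr rfl fun m _ => ?_
    simp only [hS]
    ring
  -- Laplacian formula
  have hl : ∀ x y : ℝ,
      lap (fun x y => ∑ m ∈ F, a m * cosB m.1 m.2 (c m) x y) x y
        = ∑ m ∈ F, (Q m + R m) * (Cc m.1 x * Cc m.2 y) := by
    intro x y
    unfold lap
    rw [hx2 x y, hy2 x y, ← Finset.sum_add_distrib]
    exact Finset.sum_congr rfl fun m _ => by ring
  -- integrand rewrites
  have hLgrand : ∀ x y : ℝ,
      (lap (fun x y => ∑ m ∈ F, a m * cosB m.1 m.2 (c m) x y) x y) ^ 2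
        = ∑ p ∈ F ×ˢ F,
            ((((Q p.1 + R p.1) * (Q p.2 + R p.2)) * (Cc p.1.1 x * Cc p.2.1 x))
                * (Cc p.1.2 y * Cc p.2.2 y)
              + (0:ℝ) * (0:ℝ)) := by
    intro x y
    rw [hl x y, sq_sum_prod F (fun m => Q m + R m) (fun m => Cc m.1 x * Cc m.2 y)]
    exact Finset.sum_congr rfl fun p _ => by ring
  have hHgrand : ∀ x y : ℝ,
      hessF2 (fun x y => ∑ m ∈ F, a m * cosB m.1 m.2 (c m) x y) x y
        = ∑ p ∈ F ×ˢ F,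
            (((Q p.1 * Q p.2 + R p.1 * R p.2) * (Cc p.1.1 x * Cc p.2.1 x))
                * (Cc p.1.2 y * Cc p.2.2 y)
              + ((2 * S p.1 * S p.2) * (Sc p.1.1 x * Sc p.2.1 x))
                * (Sc p.1.2 y * Sc p.2.2 y)) := by
    intro x y
    unfold hessF2
    rw [hx2 x y, hy2 x y, hxy x y,
      sq_sum_prod F Q (fun m => Cc m.1 x * Cc m.2 y),
      sq_sum_prod F R (fun m => Cc m.1 x * Cc m.2 y),
      sq_sum_prod F S (fun m => Sc m.1 x * Sc m.2 y),
      Finset.mul_sum, ← Finset.sum_add_distrib, ← Finset.sum_add_distrib]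
    exact Finset.sum_congr rfl fun p _ => by ring
  -- compute both sides
  calc (∫ x in (-1:ℝ)..1, ∫ y in (-1:ℝ)..1,
          (lap (fun x y => ∑ m ∈ F, a m * cosB m.1 m.2 (c m) x y) x y) ^ 2)
      = ∫ x in (-1:ℝ)..1, ∫ y in (-1:ℝ)..1, ∑ p ∈ F ×ˢ F,
          ((fun p x => ((Q p.1 + R p.1) * (Q p.2 + R p.2)) * (Cc p.1.1 x * Cc p.2.1 x)) p x
              * (fun (p : (ℕ×ℕ)×(ℕ×ℕ)) y => Cc p.1.2 y * Cc p.2.2 y) p y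
            + (fun (_ : (ℕ×ℕ)×(ℕ×ℕ)) (_ : ℝ) => (0:ℝ)) p x
              * (fun (_ : (ℕ×ℕ)×(ℕ×ℕ)) (_ : ℝ) => (0:ℝ)) p y) := by
        exact integral_congr fun x _ => integral_congr fun y _ => hLgrand x y
    _ = ∑ p ∈ F ×ˢ F,
          ((∫ x in (-1:ℝ)..1, ((Q p.1 + R p.1) * (Q p.2 + R p.2)) * (Cc p.1.1 x * Cc p.2.1 x))
              * (∫ y in (-1:ℝ)..1, Cc p.1.2 y * Cc p.2.2 y)
            + (∫ x in (-1:ℝ)..1, (0:ℝ)) * (∫ y in (-1:ℝ)..1, (0:ℝ))) := by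
        exact iint_sum2 (F ×ˢ F) _ _ _ _
          (fun p => continuous_const.mul ((contCc _).mul (contCc _)))
          (fun p => (contCc _).mul (contCc _))
          (fun p => continuous_const) (fun p => continuous_const)
    _ = ∑ p ∈ F ×ˢ F,
          (((Q p.1 * Q p.2 + R p.1 * R p.2)
              * (∫ x in (-1:ℝ)..1, Cc p.1.1 x * Cc p.2.1 x))
              * (∫ y in (-1:ℝ)..1, Cc p.1.2 y * Cc p.2.2 y)
            + ((2 * S p.1 * S p.2) * (∫ x in (-1:ℝ)..1, Sc p.1.1 x * Sc p.2.1 x))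
              * (∫ y in (-1:ℝ)..1, Sc p.1.2 y * Sc p.2.2 y)) := by
        refine Finset.sum_congr rfl fun p _ => ?_
        rw [integral_const_mul]
        simp only [intervalIntegral.integral_zero, mul_zero, zero_mul, add_zero]
        simp only [hQ, hR, hS]
        linear_combination
          (-(a p.1 * c p.1 * (a p.2 * c p.2))) * (
            ((π * (p.1.2:ℝ)/2) * (π * (p.2.2:ℝ)/2)
                * (∫ x in (-1:ℝ)..1, Sc p.1.2 x * Sc p.2.2 x)) * keyCS p.1.1 p.2.1
            + ((π * (p.1.1:ℝ)/2)^2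
                * (∫ x in (-1:ℝ)..1, Cc p.1.1 x * Cc p.2.1 x)) * keyCS' p.1.2 p.2.2
            + ((π * (p.1.2:ℝ)/2) * (π * (p.2.2:ℝ)/2)
                * (∫ x in (-1:ℝ)..1, Sc p.1.2 x * Sc p.2.2 x)) * keyCS' p.1.1 p.2.1
            + ((π * (p.2.1:ℝ)/2)^2
                * (∫ x in (-1:ℝ)..1, Cc p.1.1 x * Cc p.2.1 x)) * keyCS p.1.2 p.2.2)
    _ = ∑ p ∈ F ×ˢ F,
          ((∫ x in (-1:ℝ)..1, (Q p.1 * Q p.2 + R p.1 * R p.2) * (Cc p.1.1 x * Cc p.2.1 x))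
              * (∫ y in (-1:ℝ)..1, Cc p.1.2 y * Cc p.2.2 y)
            + (∫ x in (-1:ℝ)..1, (2 * S p.1 * S p.2) * (Sc p.1.1 x * Sc p.2.1 x))
              * (∫ y in (-1:ℝ)..1, Sc p.1.2 y * Sc p.2.2 y)) := by
        refine Finset.sum_congr rfl fun p _ => ?_
        rw [integral_const_mul, integral_const_mul]
    _ = ∫ x in (-1:ℝ)..1, ∫ y in (-1:ℝ)..1,
          hessF2 (fun x y => ∑ m ∈ F, a m * cosB m.1 m.2 (c m) x y) x y := by
        refine ((iint_sum2 (F ×ˢ F)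
          (fun p x => (Q p.1 * Q p.2 + R p.1 * R p.2) * (Cc p.1.1 x * Cc p.2.1 x))
          (fun p y => Cc p.1.2 y * Cc p.2.2 y)
          (fun p x => (2 * S p.1 * S p.2) * (Sc p.1.1 x * Sc p.2.1 x))
          (fun p y => Sc p.1.2 y * Sc p.2.2 y)
          (fun p => continuous_const.mul ((contCc _).mul (contCc _)))
          (fun p => (contCc _).mul (contCc _))
          (fun p => continuous_const.mul ((contSc _).mul (contSc _)))
          (fun p => (contSc _).mul (contSc _))).symm.trans ?_)
        exact integral_congr fun x _ => integral_congr fun y _ => (hHgrand x y).symm
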